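/- Define the boundary map of order 1 by γ1 := -γ0 ∘ δ ∘ P1, where P1 is the orthogonal projection in H1^1 = dom δ (graph norm) onto N1 = ker(dδ+1). Then ker γ1 = dom d* (viewed inside dom δ), γ1 is bounded from H1^1 to G with operator norm equal to ‖γ0‖, and ran γ1 = ran γ0 = G^{1/2}. -/

import Mathlib

open scoped InnerProductSpace
open ContinuousLinearMap

theorem graph_mem
    {H0 H1 H01 : Type*}
    [NormedAddCommGroup H0] [InnerProductSpace ℂ H0] [CompleteSpace H0]
    [NormedAddCommGroup H1] [InnerProductSpace ℂ H1] [CompleteSpace H1]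
    [NormedAddCommGroup H01] [InnerProductSpace ℂ H01] [CompleteSpace H01]
    (ι0 : H01 →L[ℂ] H0) (d : H01 →L[ℂ] H1)
    (hgraph0 : ∀ f g : H01, ⟪f, g⟫_ℂ = ⟪ι0 f, ι0 g⟫_ℂ + ⟪d f, d g⟫_ℂ)
    (a : H1) (b : H0)
    (hab : ∀ (x : H1) (y : H0), (∀ f : H01, ⟪d f, x⟫_ℂ = ⟪ι0 f, y⟫_ℂ) →
      ⟪x, a⟫_ℂ + ⟪y, b⟫_ℂ = 0) :
    ∃ h : H01, d h = a ∧ ι0 h = -b := by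
  classical
  set E := WithLp 2 (H1 × H0)
  let e := (WithLp.linearEquiv 2 ℂ (H1 × H0)).symm
  let Φlin : H01 →ₗ[ℂ] E :=
    (e : (H1 × H0) →ₗ[ℂ] E).comp ((d : H01 →ₗ[ℂ] H1).prod (-(ι0 : H01 →ₗ[ℂ] H0)))
  have hΦfst : ∀ f : H01, (Φlin f).fst = d f := fun f => rfl
  have hΦsnd : ∀ f : H01, (Φlin f).snd = -(ι0 f) := fun f => rfl
  have hinner : ∀ f g : H01, ⟪Φlin f, Φlin g⟫_ℂ = ⟪f, g⟫_ℂ := by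
    intro f g
    rw [WithLp.prod_inner_apply]; simp only [WithLp.ofLp_fst, WithLp.ofLp_snd]; rw [hΦfst, hΦfst, hΦsnd, hΦsnd, inner_neg_neg, hgraph0]
    ring
  let Φ : H01 →ₗᵢ[ℂ] E := Φlin.isometryOfInner hinner
  have hΦ : ∀ f : H01, Φ f = Φlin f := fun f => rfl
  let V : Submodule ℂ E := LinearMap.range Φlin
  have hVclosed : IsClosed (V : Set E) := by
    have : (V : Set E) = Set.range Φ := by
      ext x; simp [V, LinearMap.mem_range, hΦ, Set.mem_range]
    rw [this]
    exact Φ.isometry.isClosedEmbedding.isClosed_range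
  haveI : CompleteSpace V := hVclosed.completeSpace_coe
  have hVV : Vᗮᗮ = V := Submodule.orthogonal_orthogonal V
  set p : E := e (a, b) with hp
  have hpfst : p.fst = a := rfl
  have hpsnd : p.snd = b := rfl
  have hpmem : p ∈ Vᗮᗮ := by
    rw [Submodule.mem_orthogonal]
    intro v hv
    have hv' : ∀ f : H01, ⟪d f, v.fst⟫_ℂ = ⟪ι0 f, v.snd⟫_ℂ := by
      intro f
      have := (Submodule.mem_orthogonal V v).mp hv (Φlin f) ⟨f, rfl⟩
      rw [WithLp.prod_inner_apply] at this; simp only [WithLp.ofLp_fst, WithLp.ofLp_snd] at this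
      rw [hΦfst, hΦsnd, inner_neg_left] at this
      linear_combination this
    have := hab v.fst v.snd hv'
    rw [WithLp.prod_inner_apply]; simp only [WithLp.ofLp_fst, WithLp.ofLp_snd]; rw [hpfst, hpsnd, this]
  rw [hVV] at hpmem
  obtain ⟨f, hf⟩ := hpmem
  refine ⟨f, ?_, ?_⟩
  · have := congrArg Prod.fst (congrArg (WithLp.equiv 2 (H1 × H0)) hf)
    simpa [hΦfst, hpfst] using this
  · have := congrArg Prod.snd (congrArg (WithLp.equiv 2 (H1 × H0)) hf)
    have h2 : -(ι0 f) = b := by simpa [hΦsnd, hpsnd] using this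
    rw [← h2, neg_neg]

theorem statement_6
    {H0 H1 G H01 H11 : Type*}
    [NormedAddCommGroup H0] [InnerProductSpace ℂ H0] [CompleteSpace H0]
    [NormedAddCommGroup H1] [InnerProductSpace ℂ H1] [CompleteSpace H1]
    [NormedAddCommGroup G] [InnerProductSpace ℂ G] [CompleteSpace G]
    [NormedAddCommGroup H01] [InnerProductSpace ℂ H01] [CompleteSpace H01]
    [NormedAddCommGroup H11] [InnerProductSpace ℂ H11] [CompleteSpace H11]
    (ι0 : H01 →L[ℂ] H0) (d : H01 →L[ℂ] H1) (γ0 : H01 →L[ℂ] G)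
    (ι1 : H11 →L[ℂ] H1) (δ : H11 →L[ℂ] H0)
    (hι0 : Function.Injective ι0) (hι1 : Function.Injective ι1)
    (hgraph0 : ∀ f g : H01, ⟪f, g⟫_ℂ = ⟪ι0 f, ι0 g⟫_ℂ + ⟪d f, d g⟫_ℂ)
    (hgraph1 : ∀ f g : H11, ⟪f, g⟫_ℂ = ⟪ι1 f, ι1 g⟫_ℂ + ⟪δ f, δ g⟫_ℂ)
    (hdom : Dense (Set.range ι0))
    (hker : Dense (ι0 '' {f : H01 | γ0 f = 0}))
    (hran : Dense (Set.range γ0))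
    (hadj1 : ∀ (g : H11) (f : H01), γ0 f = 0 → ⟪d f, ι1 g⟫_ℂ = ⟪ι0 f, δ g⟫_ℂ)
    (hadj2 : ∀ (g1 : H1) (h0 : H0),
      (∀ f : H01, γ0 f = 0 → ⟪d f, g1⟫_ℂ = ⟪ι0 f, h0⟫_ℂ) →
      ∃ g : H11, ι1 g = g1 ∧ δ g = h0)
    (γ1 : H11 →L[ℂ] G)
    (hγ1K : ∀ g : H11, (∀ f : H01, ⟪d f, ι1 g⟫_ℂ = ⟪ι0 f, δ g⟫_ℂ) → γ1 g = 0)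
    (hγ1N : ∀ (g : H11) (n : H01),
      (∃ h : H01, ι0 h = δ g ∧ d h = -(ι1 g)) → ι0 n = δ g → γ1 g = -(γ0 n))
    : (∀ g : H11, γ1 g = 0 ↔ ∀ f : H01, ⟪d f, ι1 g⟫_ℂ = ⟪ι0 f, δ g⟫_ℂ) ∧
      ‖γ1‖ = ‖γ0‖ ∧
      Set.range γ1 = Set.range γ0 := by
  classical
  -- The subspace K = dom d* inside H11
  let K : Submodule ℂ H11 :=
    { carrier := {g | ∀ f : H01, ⟪d f, ι1 g⟫_ℂ = ⟪ι0 f, δ g⟫_ℂ}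
      add_mem' := by
        intro a b ha hb f
        rw [map_add, map_add, inner_add_right, inner_add_right, ha f, hb f]
      zero_mem' := by intro f; simp
      smul_mem' := by
        intro c a ha f
        rw [map_smul, map_smul, inner_smul_right, inner_smul_right, ha f] }
  have hKc : IsClosed (K : Set H11) := by
    have hset : (K : Set H11) = ⋂ f : H01, {g | ⟪d f, ι1 g⟫_ℂ = ⟪ι0 f, δ g⟫_ℂ} := by
      ext g; simp only [Set.mem_iInter, Set.mem_setOf_eq]; rfl
    rw [hset]
    exact isClosed_iInter fun f => isClosed_eq
      (Continuous.inner continuous_const ι1.continuous)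
      (Continuous.inner continuous_const δ.continuous)
  haveI : CompleteSpace K := hKc.completeSpace_coe
  -- elements of Kᗮ lie in N
  have hperp : ∀ g : H11, g ∈ Kᗮ → ∃ h : H01, ι0 h = δ g ∧ d h = -(ι1 g) := by
    intro g hg
    obtain ⟨f, hdf, hι0f⟩ := graph_mem ι0 d hgraph0 (ι1 g) (δ g) (by
      intro x y hxy
      obtain ⟨k, hk1, hk2⟩ := hadj2 x y (fun f _ => hxy f)
      have hkK : k ∈ K := by intro f; rw [hk1, hk2]; exact hxy f
      have h0 : ⟪k, g⟫_ℂ = 0 := (Submodule.mem_orthogonal K g).mp hg k hkK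
      rw [hgraph1, hk1, hk2] at h0
      exact h0)
    exact ⟨-f, by rw [map_neg, hι0f, neg_neg], by rw [map_neg, hdf]⟩
  -- master decomposition for elements of H11
  have master : ∀ g : H11, ∃ (k m : H11) (h : H01),
      (∀ f : H01, ⟪d f, ι1 k⟫_ℂ = ⟪ι0 f, δ k⟫_ℂ) ∧ ι0 h = δ m ∧ d h = -(ι1 m) ∧
      g = k + m ∧ ‖h‖ = ‖m‖ ∧ ‖m‖ ≤ ‖g‖ ∧ γ1 g = -(γ0 h) := by
    intro g
    obtain ⟨k, hkK, m, hm, hg⟩ := K.exists_add_mem_mem_orthogonal g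
    obtain ⟨h, hι0h, hdh⟩ := hperp m hm
    have hnorm : ‖h‖ = ‖m‖ := by
      have hin : ⟪h, h⟫_ℂ = ⟪m, m⟫_ℂ := by
        rw [hgraph0, hgraph1, hι0h, hdh, inner_neg_neg]; ring
      have h2 : ‖h‖ ^ 2 = ‖m‖ ^ 2 := by
        rw [inner_self_eq_norm_sq_to_K, inner_self_eq_norm_sq_to_K] at hin
        exact_mod_cast hin
      nlinarith [norm_nonneg h, norm_nonneg m]
    have hle : ‖m‖ ≤ ‖g‖ := by
      have hkm : ⟪k, m⟫_ℂ = 0 := (Submodule.mem_orthogonal K m).mp hm k hkK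
      have hsq : ‖g‖ * ‖g‖ = ‖k‖ * ‖k‖ + ‖m‖ * ‖m‖ := by
        rw [hg]; exact norm_add_sq_eq_norm_sq_add_norm_sq_of_inner_eq_zero k m hkm
      nlinarith [norm_nonneg g, norm_nonneg m, mul_self_nonneg ‖k‖]
    have hγ : γ1 g = -(γ0 h) := by
      rw [hg, map_add, hγ1K k hkK, zero_add]
      exact hγ1N m h ⟨h, hι0h, hdh⟩ hι0h
    exact ⟨k, m, h, hkK, hι0h, hdh, hg, hnorm, hle, hγ⟩
  -- master decomposition for elements of H01
  have master0 : ∀ f : H01, ∃ (h : H01) (m : H11),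
      ι1 m = -(d h) ∧ δ m = ι0 h ∧ ‖m‖ = ‖h‖ ∧ ‖h‖ ≤ ‖f‖ ∧ γ0 f = γ1 (-m) := by
    intro f
    have hK0c : IsClosed ((LinearMap.ker (γ0 : H01 →ₗ[ℂ] G) : Submodule ℂ H01) : Set H01) :=
      by exact ContinuousLinearMap.isClosed_ker γ0
    haveI : CompleteSpace (LinearMap.ker (γ0 : H01 →ₗ[ℂ] G) : Submodule ℂ H01) := hK0c.completeSpace_coe
    obtain ⟨f0, hf0, h, hh, hf⟩ :=
      (LinearMap.ker (γ0 : H01 →ₗ[ℂ] G) : Submodule ℂ H01).exists_add_mem_mem_orthogonal f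
    obtain ⟨m, hι1m, hδm⟩ := hadj2 (-(d h)) (ι0 h) (by
      intro f' hf'
      have h0 : ⟪f', h⟫_ℂ = 0 :=
        (Submodule.mem_orthogonal _ h).mp hh f' (LinearMap.mem_ker.mpr hf')
      rw [hgraph0] at h0
      rw [inner_neg_right]
      linear_combination -h0)
    have hnorm : ‖m‖ = ‖h‖ := by
      have hin : ⟪m, m⟫_ℂ = ⟪h, h⟫_ℂ := by
        rw [hgraph1, hgraph0, hι1m, hδm, inner_neg_neg]; ring
      have h2 : ‖m‖ ^ 2 = ‖h‖ ^ 2 := by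
        rw [inner_self_eq_norm_sq_to_K, inner_self_eq_norm_sq_to_K] at hin
        exact_mod_cast hin
      nlinarith [norm_nonneg h, norm_nonneg m]
    have hle : ‖h‖ ≤ ‖f‖ := by
      have hfh : ⟪f0, h⟫_ℂ = 0 :=
        (Submodule.mem_orthogonal _ h).mp hh f0 hf0
      have hsq : ‖f‖ * ‖f‖ = ‖f0‖ * ‖f0‖ + ‖h‖ * ‖h‖ := by
        rw [hf]; exact norm_add_sq_eq_norm_sq_add_norm_sq_of_inner_eq_zero f0 h hfh
      nlinarith [norm_nonneg f, norm_nonneg h, mul_self_nonneg ‖f0‖]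
    have hγ0f : γ0 f = γ0 h := by
      rw [hf, map_add]
      have : γ0 f0 = 0 := LinearMap.mem_ker.mp hf0
      rw [this, zero_add]
    have hγ : γ0 f = γ1 (-m) := by
      have h1 : γ1 m = -(γ0 h) :=
        hγ1N m h ⟨h, hδm.symm, by rw [hι1m, neg_neg]⟩ hδm.symm
      rw [map_neg, h1, neg_neg, hγ0f]
    exact ⟨h, m, hι1m, hδm, hnorm, hle, hγ⟩
  refine ⟨?_, ?_, ?_⟩
  · -- kernel characterization
    intro g
    constructor
    · intro hγ
      obtain ⟨k, m, h, hk, hι0h, hdh, hg, _, _, hγeq⟩ := master g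
      rw [hγ] at hγeq
      have hγ0h : γ0 h = 0 := by
        have := hγeq.symm
        rwa [neg_eq_zero] at this
      have hmm : m = 0 := by
        have hA := hadj1 m h hγ0h
        rw [hdh, hι0h, inner_neg_left] at hA
        have : ⟪m, m⟫_ℂ = 0 := by
          rw [hgraph1]; linear_combination -hA
        exact inner_self_eq_zero.mp this
      rw [hg, hmm, add_zero]
      exact hk
    · exact hγ1K g
  · -- norms
    refine le_antisymm ?_ ?_
    · refine ContinuousLinearMap.opNorm_le_bound _ (norm_nonneg γ0) fun g => ?_
      obtain ⟨k, m, h, _, _, _, _, hnorm, hle, hγeq⟩ := master g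
      rw [hγeq, norm_neg]
      calc ‖γ0 h‖ ≤ ‖γ0‖ * ‖h‖ := γ0.le_opNorm h
        _ = ‖γ0‖ * ‖m‖ := by rw [hnorm]
        _ ≤ ‖γ0‖ * ‖g‖ := by
            exact mul_le_mul_of_nonneg_left hle (norm_nonneg γ0)
    · refine ContinuousLinearMap.opNorm_le_bound _ (norm_nonneg γ1) fun f => ?_
      obtain ⟨h, m, _, _, hnorm, hle, hγ⟩ := master0 f
      rw [hγ]
      calc ‖γ1 (-m)‖ ≤ ‖γ1‖ * ‖-m‖ := γ1.le_opNorm (-m)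
        _ = ‖γ1‖ * ‖h‖ := by rw [norm_neg, hnorm]
        _ ≤ ‖γ1‖ * ‖f‖ := mul_le_mul_of_nonneg_left hle (norm_nonneg γ1)
  · -- ranges
    ext x
    constructor
    · rintro ⟨g, rfl⟩
      obtain ⟨k, m, h, _, _, _, _, _, _, hγeq⟩ := master g
      exact ⟨-h, by rw [map_neg, hγeq]⟩
    · rintro ⟨f, rfl⟩
      obtain ⟨h, m, _, _, _, _, hγ⟩ := master0 f
      exact ⟨-m, hγ.symm⟩
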